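/- Let B, A be operator-valued functions on ℂ satisfying the Yang–Baxter exchange relations, let |0⟩ be a vector with A(λ)|0⟩ = α(λ)|0⟩ and D(λ)|0⟩ = δ(λ)|0⟩ for scalar functions α, δ, and let ⟨Λ| be a left eigenvector of T(λ) = A(λ) + D(λ) with eigenvalue Λ(λ). Define F_n(λ₁,...,λₙ) = ⟨Λ| B(λ₁)···B(λₙ) |0⟩. Then F_n satisfies the functional equation J₀·F_n(λ₁,...,λₙ) − Σ_{i=1}^n K_{λᵢ}·F_n(λ₀, λ₁,...,λ̂ᵢ,...,λₙ) = Λ(λ₀)·F_n(λ₁,...,λₙ), where J₀ = α(λ₀)∏ⱼ a(λⱼ−λ₀)/b(λⱼ−λ₀) + δ(λ₀)∏ⱼ a(λ₀−λⱼ)/b(λ₀−λⱼ) and K_{λᵢ} = α(λᵢ)(c(λᵢ−λ₀)/b(λᵢ−λ₀))∏_{j≠i} a(λⱼ−λᵢ)/b(λⱼ−λᵢ) + δ(λᵢ)(c(λ₀−λᵢ)/b(λ₀−λᵢ))∏_{j≠i} a(λᵢ−λⱼ)/b(λᵢ−λⱼ), and λ̂ᵢ denotes omission of λᵢ. -/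

import Mathlib

open Finset Complex

private lemma aux0 (γ p q : ℂ) :
    Complex.sinh (p + γ) * Complex.sinh q + Complex.sinh γ * Complex.sinh (p - q)
      = Complex.sinh (q + γ) * Complex.sinh p := by
  rw [Complex.sinh_add, Complex.sinh_add, Complex.sinh_sub]; ring

private lemma sinh_key (γ x u v : ℂ) (h1 : Complex.sinh (u - x) ≠ 0)
    (h2 : Complex.sinh (v - x) ≠ 0) (h3 : Complex.sinh (v - u) ≠ 0) :
    Complex.sinh (u - x + γ) / Complex.sinh (u - x) * (Complex.sinh γ / Complex.sinh (v - x))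
      - Complex.sinh γ / Complex.sinh (u - x) * (Complex.sinh γ / Complex.sinh (v - u))
      = Complex.sinh γ / Complex.sinh (v - x)
          * (Complex.sinh (u - v + γ) / Complex.sinh (u - v)) := by
  have h4 : Complex.sinh (u - v) ≠ 0 := by
    rw [show u - v = -(v - u) by ring, Complex.sinh_neg]; simpa using h3
  have key := aux0 γ (u - x) (u - v)
  rw [show u - x - (u - v) = v - x by ring] at key
  rw [show v - u = -(u - v) by ring, Complex.sinh_neg]
  field_simp
  linear_combination
    Complex.sinh γ * key

private lemma sinh_key' (γ x u v : ℂ) (h1 : Complex.sinh (x - u) ≠ 0)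
    (h2 : Complex.sinh (x - v) ≠ 0) (h3 : Complex.sinh (u - v) ≠ 0) :
    Complex.sinh (x - u + γ) / Complex.sinh (x - u) * (Complex.sinh γ / Complex.sinh (x - v))
      - Complex.sinh γ / Complex.sinh (x - u) * (Complex.sinh γ / Complex.sinh (u - v))
      = Complex.sinh γ / Complex.sinh (x - v)
          * (Complex.sinh (v - u + γ) / Complex.sinh (v - u)) := by
  have h1' : Complex.sinh (-u - -x) ≠ 0 := by rw [show -u - -x = x - u by ring]; exact h1
  have h2' : Complex.sinh (-v - -x) ≠ 0 := by rw [show -v - -x = x - v by ring]; exact h2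
  have h3' : Complex.sinh (-v - -u) ≠ 0 := by rw [show -v - -u = u - v by ring]; exact h3
  have := sinh_key γ (-x) (-u) (-v) h1' h2' h3'
  rw [show -u - -x = x - u by ring, show -v - -x = x - v by ring,
    show -v - -u = u - v by ring, show -u - -v = v - u by ring] at this
  exact this

private lemma comm_through {V : Type*} [AddCommGroup V] [Module ℂ V]
    {n : ℕ} (B E : ℂ → Module.End ℂ V) (l : Fin n → ℂ)
    (hBB : ∀ x₁ x₂, Commute (B x₁) (B x₂))
    (r sc : ℂ → ℂ → ℂ) (s : Finset (Fin n)) :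
    ∀ (x : ℂ),
      (∀ k ∈ s, E x * B (l k)
          = r (l k) x • (B (l k) * E x) - sc (l k) x • (B x * E (l k))) →
      (∀ k, ∀ i ∈ s, k ≠ i → E (l k) * B (l i)
          = r (l i) (l k) • (B (l i) * E (l k)) - sc (l i) (l k) • (B (l k) * E (l i))) →
      (∀ k ∈ s, ∀ i ∈ s, k ≠ i →
        r (l k) x * sc (l i) x - sc (l k) x * sc (l i) (l k) = sc (l i) x * r (l k) (l i)) →
      (∀ k, ∀ j ∈ s, ∀ i ∈ s, k ≠ j → k ≠ i → j ≠ i →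
        r (l j) (l k) * sc (l i) (l k) - sc (l j) (l k) * sc (l i) (l j)
          = sc (l i) (l k) * r (l j) (l i)) →
      E x * s.noncommProd (fun j => B (l j)) (fun p _ q _ _ => hBB (l p) (l q))
        = (∏ j ∈ s, r (l j) x)
            • (s.noncommProd (fun j => B (l j)) (fun p _ q _ _ => hBB (l p) (l q)) * E x)
          - ∑ i ∈ s, (sc (l i) x * ∏ j ∈ s.erase i, r (l j) (l i)) •
              (B x * (s.erase i).noncommProd (fun j => B (l j))
                  (fun p _ q _ _ => hBB (l p) (l q)) * E (l i)) := by
  induction s using Finset.induction_on with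
  | empty => intro x _ _ _ _; erw [Finset.noncommProd_empty]; simp
  | @insert k t hk ih =>
    intro x hEx hEl hidx hidl
    have hkx := hEx k (mem_insert_self k t)
    have ihx := ih x (fun i hi => hEx i (mem_insert_of_mem hi))
      (fun j i hi hne => hEl j i (mem_insert_of_mem hi) hne)
      (fun j hj i hi hne => hidx j (mem_insert_of_mem hj) i (mem_insert_of_mem hi) hne)
      (fun j i hi i' hi' h1 h2 h3 => hidl j i (mem_insert_of_mem hi) i' (mem_insert_of_mem hi') h1 h2 h3)
    have ihk := ih (l k) (fun i hi => hEl k i (mem_insert_of_mem hi) (fun h => hk (h ▸ hi)))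
      (fun j i hi hne => hEl j i (mem_insert_of_mem hi) hne)
      (fun j hj i hi hne => hidl k j (mem_insert_of_mem hj) i (mem_insert_of_mem hi)
        (fun h => hk (h ▸ hj)) (fun h => hk (h ▸ hi)) hne)
      (fun j i hi i' hi' h1 h2 h3 => hidl j i (mem_insert_of_mem hi) i' (mem_insert_of_mem hi') h1 h2 h3)
    erw [Finset.noncommProd_insert_of_notMem _ _ _ _ hk]
    rw [← mul_assoc, hkx, sub_mul,
      smul_mul_assoc, smul_mul_assoc, mul_assoc, mul_assoc, ihx, ihk,
      Finset.prod_insert hk, Finset.sum_insert hk, Finset.erase_insert hk]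
    have hsum : (∑ i ∈ t, (sc (l i) x * ∏ j ∈ (insert k t).erase i, r (l j) (l i)) •
          (B x * ((insert k t).erase i).noncommProd (fun j => B (l j))
              (fun p _ q _ _ => hBB (l p) (l q)) * E (l i)))
        = ∑ i ∈ t,
            ((r (l k) x * (sc (l i) x * ∏ j ∈ t.erase i, r (l j) (l i)))
              - sc (l k) x * (sc (l i) (l k) * ∏ j ∈ t.erase i, r (l j) (l i))) •
            (B (l k) * (B x * ((t.erase i).noncommProd (fun j => B (l j))
                (fun p _ q _ _ => hBB (l p) (l q)) * E (l i)))) := by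
      refine Finset.sum_congr rfl fun i hi => ?_
      have hki : k ≠ i := fun h => hk (h ▸ hi)
      rw [Finset.erase_insert_of_ne hki]
      erw [Finset.noncommProd_insert_of_notMem _ _ _ _ (fun h => hk (Finset.erase_subset _ _ h))]
      rw [
        Finset.prod_insert (fun h => hk (Finset.erase_subset _ _ h))]
      have hscal : sc (l i) x * (r (l k) (l i) * ∏ j ∈ t.erase i, r (l j) (l i))
          = (r (l k) x * (sc (l i) x * ∏ j ∈ t.erase i, r (l j) (l i)))
            - sc (l k) x * (sc (l i) (l k) * ∏ j ∈ t.erase i, r (l j) (l i)) := by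
        have := hidx k (mem_insert_self k t) i (mem_insert_of_mem hi) hki
        linear_combination (∏ j ∈ t.erase i, r (l j) (l i)) * this.symm
      rw [hscal]
      congr 1
      simp only [mul_assoc]
      rw [← mul_assoc, (hBB x (l k)).eq, mul_assoc]
    rw [hsum]
    have hswap : ∀ z : Module.End ℂ V, B x * (B (l k) * z) = B (l k) * (B x * z) :=
      fun z => by rw [← mul_assoc, (hBB x (l k)).eq, mul_assoc]
    simp only [mul_sub, Finset.mul_sum, smul_sub, smul_smul, Finset.smul_sum,
      mul_smul_comm, sub_smul, Finset.sum_sub_distrib, mul_assoc]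
    simp only [hswap]
    abel

set_option maxHeartbeats 1000000 in
/-- Theorem 1 of the paper (functional equation of the algebraic-functional approach).
With `a(x) = sinh(x+γ)`, `b(x) = sinh x`, `c(x) = sinh γ`: if `A, B, D` satisfy the
Yang–Baxter exchange relations, `|0⟩` satisfies `A(λ)|0⟩ = α(λ)|0⟩`, `D(λ)|0⟩ = δ(λ)|0⟩`,
and `⟨Λ|` is a left eigenvector of `T(λ) = A(λ) + D(λ)` with eigenvalue `Λ(λ)`, then
`F_n(λ₁,…,λₙ) = ⟨Λ|B(λ₁)⋯B(λₙ)|0⟩` satisfies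
`J₀ F_n(λ₁,…,λₙ) − Σᵢ K_{λᵢ} F_n(λ₀,…,λ̂ᵢ,…,λₙ) = Λ(λ₀) F_n(λ₁,…,λₙ)` with the
coefficients `J₀`, `K_{λᵢ}` of the paper. -/
theorem functional_equation_transfer_matrix
    {V : Type*} [AddCommGroup V] [Module ℂ V]
    (γ : ℂ) (A B D : ℂ → Module.End ℂ V)
    (α δ Λ : ℂ → ℂ) (v₀ : V) (ℓ : V →ₗ[ℂ] ℂ)
    (hBB : ∀ x₁ x₂, Commute (B x₁) (B x₂))
    (hAB : ∀ x₁ x₂, Complex.sinh (x₂ - x₁) ≠ 0 →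
      A x₁ * B x₂
        = (Complex.sinh (x₂ - x₁ + γ) / Complex.sinh (x₂ - x₁)) • (B x₂ * A x₁)
          - (Complex.sinh γ / Complex.sinh (x₂ - x₁)) • (B x₁ * A x₂))
    (hDB : ∀ x₁ x₂, Complex.sinh (x₁ - x₂) ≠ 0 →
      D x₁ * B x₂
        = (Complex.sinh (x₁ - x₂ + γ) / Complex.sinh (x₁ - x₂)) • (B x₂ * D x₁)
          - (Complex.sinh γ / Complex.sinh (x₁ - x₂)) • (B x₁ * D x₂))
    (hA0 : ∀ x, A x v₀ = α x • v₀) (hD0 : ∀ x, D x v₀ = δ x • v₀)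
    (hEig : ∀ x (w : V), ℓ ((A x + D x) w) = Λ x * ℓ w)
    (n : ℕ) (x₀ : ℂ) (l : Fin n → ℂ)
    (hb0 : ∀ j, Complex.sinh (l j - x₀) ≠ 0)
    (hb0' : ∀ j, Complex.sinh (x₀ - l j) ≠ 0)
    (hbij : ∀ i j, i ≠ j → Complex.sinh (l j - l i) ≠ 0) :
    (α x₀ * ∏ j, Complex.sinh (l j - x₀ + γ) / Complex.sinh (l j - x₀)
        + δ x₀ * ∏ j, Complex.sinh (x₀ - l j + γ) / Complex.sinh (x₀ - l j))
      * ℓ ((Finset.univ.noncommProd (fun j => B (l j))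
            (fun p _ q _ _ => hBB (l p) (l q))) v₀)
      - ∑ i,
        (α (l i) * (Complex.sinh γ / Complex.sinh (l i - x₀))
            * ∏ j ∈ Finset.univ.erase i,
                Complex.sinh (l j - l i + γ) / Complex.sinh (l j - l i)
          + δ (l i) * (Complex.sinh γ / Complex.sinh (x₀ - l i))
            * ∏ j ∈ Finset.univ.erase i,
                Complex.sinh (l i - l j + γ) / Complex.sinh (l i - l j))
          * ℓ ((B x₀
              * (Finset.univ.erase i).noncommProd (fun j => B (l j))
                  (fun p _ q _ _ => hBB (l p) (l q))) v₀)
      = Λ x₀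
        * ℓ ((Finset.univ.noncommProd (fun j => B (l j))
            (fun p _ q _ _ => hBB (l p) (l q))) v₀) := by
  classical
  set P : Module.End ℂ V := Finset.univ.noncommProd (fun j => B (l j))
      (fun p _ q _ _ => hBB (l p) (l q)) with hP
  set Q : Fin n → Module.End ℂ V := fun i => (Finset.univ.erase i).noncommProd (fun j => B (l j))
      (fun p _ q _ _ => hBB (l p) (l q)) with hQ
  have hA := comm_through B A l hBB
    (fun u y => Complex.sinh (u - y + γ) / Complex.sinh (u - y))
    (fun u y => Complex.sinh γ / Complex.sinh (u - y)) Finset.univ x₀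
    (fun k _ => hAB x₀ (l k) (hb0 k))
    (fun k i _ hne => hAB (l k) (l i) (hbij k i hne))
    (fun k _ i _ hne => sinh_key γ x₀ (l k) (l i) (hb0 k) (hb0 i) (hbij k i hne))
    (fun k j _ i _ h1 h2 h3 => sinh_key γ (l k) (l j) (l i) (hbij k j h1) (hbij k i h2) (hbij j i h3))
  have hD := comm_through B D l hBB
    (fun u y => Complex.sinh (y - u + γ) / Complex.sinh (y - u))
    (fun u y => Complex.sinh γ / Complex.sinh (y - u)) Finset.univ x₀
    (fun k _ => hDB x₀ (l k) (hb0' k))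
    (fun k i _ hne => hDB (l k) (l i) (hbij i k (Ne.symm hne)))
    (fun k _ i _ hne => sinh_key' γ x₀ (l k) (l i) (hb0' k) (hb0' i) (hbij i k (Ne.symm hne)))
    (fun k j _ i _ h1 h2 h3 => sinh_key' γ (l k) (l j) (l i) (hbij j k h1.symm) (hbij i k h2.symm) (hbij i j h3.symm))
  have eqA : ℓ ((A x₀) (P v₀))
      = (∏ j, Complex.sinh (l j - x₀ + γ) / Complex.sinh (l j - x₀))
          * (α x₀ * ℓ (P v₀))
        - ∑ i, (Complex.sinh γ / Complex.sinh (l i - x₀)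
            * ∏ j ∈ Finset.univ.erase i, Complex.sinh (l j - l i + γ) / Complex.sinh (l j - l i))
            * (α (l i) * ℓ ((B x₀) ((Q i) v₀))) := by
    have := congrArg (fun T : Module.End ℂ V => ℓ (T v₀)) hA
    simp only [Module.End.mul_apply, LinearMap.smul_apply, LinearMap.sub_apply,
      LinearMap.sum_apply, map_sub, map_sum, map_smul, hA0, smul_eq_mul] at this
    exact this
  have eqD : ℓ ((D x₀) (P v₀))
      = (∏ j, Complex.sinh (x₀ - l j + γ) / Complex.sinh (x₀ - l j))
          * (δ x₀ * ℓ (P v₀))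
        - ∑ i, (Complex.sinh γ / Complex.sinh (x₀ - l i)
            * ∏ j ∈ Finset.univ.erase i, Complex.sinh (l i - l j + γ) / Complex.sinh (l i - l j))
            * (δ (l i) * ℓ ((B x₀) ((Q i) v₀))) := by
    have := congrArg (fun T : Module.End ℂ V => ℓ (T v₀)) hD
    simp only [Module.End.mul_apply, LinearMap.smul_apply, LinearMap.sub_apply,
      LinearMap.sum_apply, map_sub, map_sum, map_smul, hD0, smul_eq_mul] at this
    exact this
  have eqT : ℓ ((A x₀) (P v₀)) + ℓ ((D x₀) (P v₀)) = Λ x₀ * ℓ (P v₀) := by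
    have := hEig x₀ (P v₀)
    simpa [LinearMap.add_apply, map_add] using this
  simp only [Module.End.mul_apply]
  rw [← eqT, eqA, eqD,
    show (∑ i, (α (l i) * (Complex.sinh γ / Complex.sinh (l i - x₀))
            * ∏ j ∈ Finset.univ.erase i,
                Complex.sinh (l j - l i + γ) / Complex.sinh (l j - l i)
          + δ (l i) * (Complex.sinh γ / Complex.sinh (x₀ - l i))
            * ∏ j ∈ Finset.univ.erase i,
                Complex.sinh (l i - l j + γ) / Complex.sinh (l i - l j))
          * ℓ ((B x₀) ((Q i) v₀)))
      = (∑ i, (Complex.sinh γ / Complex.sinh (l i - x₀)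
            * ∏ j ∈ Finset.univ.erase i, Complex.sinh (l j - l i + γ) / Complex.sinh (l j - l i))
            * (α (l i) * ℓ ((B x₀) ((Q i) v₀))))
        + (∑ i, (Complex.sinh γ / Complex.sinh (x₀ - l i)
            * ∏ j ∈ Finset.univ.erase i, Complex.sinh (l i - l j + γ) / Complex.sinh (l i - l j))
            * (δ (l i) * ℓ ((B x₀) ((Q i) v₀))))
      from by rw [← Finset.sum_add_distrib]; exact Finset.sum_congr rfl fun i _ => by ring]
  ring
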